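/- Let ℓ_ar(θ) = ℓ(θ + θ₀) + γ θᵀDθ where D is a positive diagonal matrix with pairwise distinct diagonal entries, and γ > 0. If ℓ_ar has a (θ', P)-reflection symmetry and the induced linear term vanishes identically (i.e., PD((I−P)θ + θ') = 0 for all θ), then PD = DP and Pθ₀ equals the center of a symmetry of ℓ. -/

import Mathlib

open Matrix

theorem stmt8 {d : ℕ} (ℓ : (Fin d → ℝ) → ℝ) (P : Matrix (Fin d) (Fin d) ℝ)
    (hproj : P * P = P) (hsymm : Pᵀ = P)
    (dv : Fin d → ℝ) (hpos : ∀ i, 0 < dv i) (hdist : Function.Injective dv)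
    (γ : ℝ) (hγ : 0 < γ) (θ₀ θ' : Fin d → ℝ) (hθ' : P *ᵥ θ' = θ')
    (hsym : ∀ θ,
      (fun ψ => ℓ (ψ + θ₀) + γ * (ψ ⬝ᵥ (Matrix.diagonal dv *ᵥ ψ))) (θ + θ')
        = (fun ψ => ℓ (ψ + θ₀) + γ * (ψ ⬝ᵥ (Matrix.diagonal dv *ᵥ ψ))) ((1 - 2 • P) *ᵥ θ + θ'))
    (hlin : ∀ θ, P *ᵥ (Matrix.diagonal dv *ᵥ ((1 - P) *ᵥ θ + θ')) = 0) :
    P * Matrix.diagonal dv = Matrix.diagonal dv * P ∧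
      ∃ θd, (∀ θ, ℓ (θ + θd) = ℓ ((1 - 2 • P) *ᵥ θ + θd)) ∧ P *ᵥ θ₀ = θd := by
  set D := Matrix.diagonal dv with hD
  have hdot : ∀ (M : Matrix (Fin d) (Fin d) ℝ) (x y : Fin d → ℝ),
      (M *ᵥ x) ⬝ᵥ y = x ⬝ᵥ (Mᵀ *ᵥ y) := by
    intro M x y
    rw [dotProduct_comm, Matrix.dotProduct_mulVec, dotProduct_comm,
      ← Matrix.mulVec_transpose]
  -- step 1: P D θ' = 0
  have h0 : P *ᵥ (D *ᵥ θ') = 0 := by simpa using hlin 0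
  -- step 2: θ' = 0
  have hθ0 : θ' = 0 := by
    have hq : θ' ⬝ᵥ (D *ᵥ θ') = 0 := by
      calc θ' ⬝ᵥ (D *ᵥ θ') = (P *ᵥ θ') ⬝ᵥ (D *ᵥ θ') := by rw [hθ']
        _ = θ' ⬝ᵥ (P *ᵥ (D *ᵥ θ')) := by rw [hdot, hsymm]
        _ = 0 := by rw [h0, dotProduct_zero]
    funext i
    have hsum : ∑ j, θ' j * (dv j * θ' j) = 0 := by
      simpa [dotProduct, hD, Matrix.mulVec_diagonal] using hq
    have hterm : ∀ j ∈ Finset.univ, 0 ≤ θ' j * (dv j * θ' j) := by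
      intro j _
      nlinarith [hpos j, mul_self_nonneg (θ' j)]
    have hz := (Finset.sum_eq_zero_iff_of_nonneg hterm).mp hsum i (Finset.mem_univ i)
    have h2 : dv i * (θ' i * θ' i) = 0 := by linear_combination hz
    rcases mul_eq_zero.mp h2 with h | h
    · exact absurd h (hpos i).ne'
    · simpa using mul_self_eq_zero.mp h
  -- step 3: P * D * (1 - P) = 0
  have h3 : P * D * (1 - P) = 0 := by
    ext i j
    have := congrFun (hlin (Pi.single j 1)) i
    rw [hθ0] at this
    rw [Matrix.mul_assoc]
    simpa [Matrix.mulVec_mulVec, Matrix.mulVec_single, Matrix.mul_apply, Matrix.mulVec, dotProduct, Matrix.col_apply] using this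
  have hPD : P * D * P = P * D := by
    rw [Matrix.mul_sub, Matrix.mul_one, sub_eq_zero] at h3
    exact h3.symm
  have hcomm : P * D = D * P := by
    have ht : (P * D * P)ᵀ = P * D * P := by
      rw [hD, Matrix.transpose_mul, Matrix.transpose_mul, hsymm, Matrix.diagonal_transpose,
        Matrix.mul_assoc]
    calc P * D = P * D * P := hPD.symm
      _ = (P * D * P)ᵀ := ht.symm
      _ = (P * D)ᵀ := by rw [hPD]
      _ = D * P := by rw [hD, Matrix.transpose_mul, hsymm, Matrix.diagonal_transpose]
  refine ⟨hcomm, P *ᵥ θ₀, ?_, rfl⟩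
  set R := (1 : Matrix (Fin d) (Fin d) ℝ) - 2 • P with hR
  clear_value R
  have hRT : Rᵀ = R := by
    rw [hR, Matrix.transpose_sub, Matrix.transpose_one, Matrix.transpose_smul, hsymm]
  have hRDR : R * D * R = D := by
    rw [hR]
    simp only [Matrix.sub_mul, Matrix.mul_sub, Matrix.one_mul, Matrix.mul_one,
      smul_mul_assoc, mul_smul_comm]
    rw [Matrix.mul_assoc] at hPD ⊢
    rw [hPD, ← hcomm]
    abel
  have hquad : ∀ θ : Fin d → ℝ, (R *ᵥ θ) ⬝ᵥ (D *ᵥ (R *ᵥ θ)) = θ ⬝ᵥ (D *ᵥ θ) := by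
    intro θ
    calc (R *ᵥ θ) ⬝ᵥ (D *ᵥ (R *ᵥ θ)) = θ ⬝ᵥ (Rᵀ *ᵥ ((D * R) *ᵥ θ)) := by
          rw [Matrix.mulVec_mulVec, hdot]
      _ = θ ⬝ᵥ ((R * (D * R)) *ᵥ θ) := by rw [hRT, Matrix.mulVec_mulVec]
      _ = θ ⬝ᵥ (D *ᵥ θ) := by rw [← Matrix.mul_assoc, hRDR]
  have hℓ : ∀ θ, ℓ (θ + θ₀) = ℓ (R *ᵥ θ + θ₀) := by
    intro θ
    have h := hsym θ
    simp only [hθ0, add_zero, ← hR] at h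
    have hq := hquad θ
    rw [hq] at h
    linarith
  intro θ
  have h := hℓ (θ - (1 - P) *ᵥ θ₀)
  have e1 : θ - (1 - P) *ᵥ θ₀ + θ₀ = θ + P *ᵥ θ₀ := by
    rw [Matrix.sub_mulVec, Matrix.one_mulVec]
    abel
  have e2 : R *ᵥ (θ - (1 - P) *ᵥ θ₀) + θ₀ = R *ᵥ θ + P *ᵥ θ₀ := by
    have hfix : R *ᵥ ((1 - P) *ᵥ θ₀) = (1 - P) *ᵥ θ₀ := by
      rw [Matrix.mulVec_mulVec, hR]
      congr 1
      rw [Matrix.sub_mul, Matrix.one_mul, smul_mul_assoc, Matrix.mul_sub, Matrix.mul_one, hproj]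
      simp
    rw [Matrix.mulVec_sub, hfix, Matrix.sub_mulVec, Matrix.one_mulVec]
    abel
  rw [e1, e2] at h
  exact h
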